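/- Let E be a real Hilbert space, f : E → ℝ twice continuously differentiable, and define the Hamiltonian H(x) = (1/2)·‖∇f(x)‖². Suppose H is differentiable with L-Lipschitz gradient (L > 0), H satisfies the PL condition with constant δ > 0 (i.e., (1/2)·‖∇H(x)‖² ≥ δ·H(x) for all x), and δ ≤ L. Fix line-search parameters r₁, ϱ ∈ (0,1) and an initial stepsize η̄ > 0. Let (p_t) ⊆ E and positive stepsizes (η_t) satisfy p_{t+1} = p_t − η_t·∇H(p_t) together with, for every t: (a) the Armijo sufficient-decrease condition H(p_t) − H(p_{t+1}) ≥ r₁·η_t·‖∇H(p_t)‖², and (b) the backtracking lower bound η_t ≥ min{η̄, 2ϱ(1−r₁)/L}. Then for every t ∈ ℕ, ‖∇f(p_t)‖² ≤ (1 − 2·min{η̄·r₁, 2ϱ(1−r₁)r₁/L}·δ)^t · ‖∇f(p_0)‖². -/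
import Mathlib


theorem hamiltonian_descent_linesearch_linear_convergence
    {E : Type*} [NormedAddCommGroup E] [InnerProductSpace ℝ E] [CompleteSpace E]
    (f : E → ℝ) (hf : ContDiff ℝ 2 f)
    (H : E → ℝ) (hH : H = fun x => (1 / 2 : ℝ) * ‖gradient f x‖ ^ 2)
    (L δ : ℝ) (hL : 0 < L) (hδ : 0 < δ) (hδL : δ ≤ L)
    (hdiff : ∀ x : E, DifferentiableAt ℝ H x)
    (hLip : ∀ x y : E, ‖gradient H x - gradient H y‖ ≤ L * ‖x - y‖)
    (hPL : ∀ x : E, δ * H x ≤ (1 / 2 : ℝ) * ‖gradient H x‖ ^ 2)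
    (r₁ ϱ : ℝ) (hr₁ : r₁ ∈ Set.Ioo (0 : ℝ) 1) (hϱ : ϱ ∈ Set.Ioo (0 : ℝ) 1)
    (ηbar : ℝ) (hηbar : 0 < ηbar)
    (p : ℕ → E) (η : ℕ → ℝ) (hηpos : ∀ t : ℕ, 0 < η t)
    (hp : ∀ t : ℕ, p (t + 1) = p t - η t • gradient H (p t))
    (harmijo : ∀ t : ℕ, r₁ * η t * ‖gradient H (p t)‖ ^ 2 ≤ H (p t) - H (p (t + 1)))
    (hback : ∀ t : ℕ, min ηbar (2 * ϱ * (1 - r₁) / L) ≤ η t) :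
    ∀ t : ℕ, ‖gradient f (p t)‖ ^ 2
      ≤ (1 - 2 * min (ηbar * r₁) (2 * ϱ * (1 - r₁) * r₁ / L) * δ) ^ t
          * ‖gradient f (p 0)‖ ^ 2 := by
  obtain ⟨hr₁0, hr₁1⟩ := hr₁
  obtain ⟨hϱ0, hϱ1⟩ := hϱ
  set m : ℝ := min (ηbar * r₁) (2 * ϱ * (1 - r₁) * r₁ / L) with hm
  set c : ℝ := 1 - 2 * m * δ with hc
  have h1r : (0:ℝ) < 1 - r₁ := by linarith
  have hprod : (0:ℝ) < 2 * ϱ * (1 - r₁) * r₁ := by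
    have := mul_pos (mul_pos hϱ0 h1r) hr₁0; nlinarith
  have hm0 : 0 ≤ m := le_min (by positivity)
    (div_nonneg hprod.le hL.le)
  have hHnonneg : ∀ x, 0 ≤ H x := by
    intro x; rw [hH]; positivity
  have hcnonneg : 0 ≤ c := by
    have h1 : m ≤ 2 * ϱ * (1 - r₁) * r₁ / L := min_le_right _ _
    have hδL' : δ / L ≤ 1 := by rw [div_le_one hL]; exact hδL
    have h2 : 2 * m * δ ≤ 2 * (2 * ϱ * (1 - r₁) * r₁ / L) * δ := by nlinarith
    have h3 : 2 * (2 * ϱ * (1 - r₁) * r₁ / L) * δ = 4 * ϱ * (1 - r₁) * r₁ * (δ / L) := by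
      ring
    have hpos : 0 ≤ 4 * ϱ * (1 - r₁) * r₁ := by nlinarith [hprod]
    have h4 : 4 * ϱ * (1 - r₁) * r₁ * (δ / L) ≤ 4 * ϱ * (1 - r₁) * r₁ := by
      nlinarith [mul_le_mul_of_nonneg_left hδL' hpos]
    have h5 : 4 * ϱ * (1 - r₁) * r₁ ≤ 1 := by nlinarith [sq_nonneg (1 - 2 * r₁)]
    simp only [hc]; linarith
  have hmr : ∀ t, m ≤ r₁ * η t := by
    intro t
    have hmeq : m = r₁ * min ηbar (2 * ϱ * (1 - r₁) / L) := by
      rw [hm, mul_min_of_nonneg _ _ hr₁0.le]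
      congr 1 <;> ring
    rw [hmeq]
    exact mul_le_mul_of_nonneg_left (hback t) hr₁0.le
  have key : ∀ t, H (p (t + 1)) ≤ c * H (p t) := by
    intro t
    have hPLt := hPL (p t)
    have harm := harmijo t
    have hg : 2 * δ * H (p t) ≤ ‖gradient H (p t)‖ ^ 2 := by linarith
    have h1 : m * (2 * δ * H (p t)) ≤ r₁ * η t * ‖gradient H (p t)‖ ^ 2 :=
      mul_le_mul (hmr t) hg (by nlinarith [hHnonneg (p t)])
        (mul_nonneg hr₁0.le (hηpos t).le)
    have : m * (2 * δ * H (p t)) ≤ H (p t) - H (p (t + 1)) := h1.trans harm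
    simp only [hc]; nlinarith
  have hiter : ∀ t, H (p t) ≤ c ^ t * H (p 0) := by
    intro t
    induction t with
    | zero => simp
    | succ n ih =>
      calc H (p (n + 1)) ≤ c * H (p n) := key n
        _ ≤ c * (c ^ n * H (p 0)) := mul_le_mul_of_nonneg_left ih hcnonneg
        _ = c ^ (n + 1) * H (p 0) := by ring
  intro t
  have h0 := hiter t
  rw [hH] at h0
  simp only at h0
  linarith
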